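/- Assume in addition the backup-closure (Bellman completeness) property: P_{t−1} f ∈ H_{t−1} for every f ∈ H_t and every t ∈ {1,…,h}, where H_0 is all functions on the singleton X_0 = {x₀}. Let w_0 ≡ 1 and, for t = 1,…,h, let w_t ∈ H_t satisfy the exact population matching equations ⟨w_t, f⟩_{μ_t} = Σ_{x∈X_{t−1}} μ_{t−1}(x)·w_{t−1}(x)·(P_{t−1}f)(x) for all f ∈ H_t. Define the occupancy distributions by d_0^π := the point mass at x₀ and d_t^π(y) := Σ_{x∈X_{t−1}} d_{t−1}^π(x)·P_{t−1}(y|x). Then for every f ∈ H_h, ⟨w_h, f⟩_{μ_h} = Σ_{y∈X_h} d_h^π(y)·f(y); that is, w_h is exactly a marginalized importance sampling weight for the functions in H_h. -/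
import Mathlib


open Finset

/-- under Bellman completeness the population weight is an MIS
weight: if additionally `P_{t−1} f ∈ H_{t−1}` for every `f ∈ H_t` (with `H₀` all
functions on the singleton `X₀`), then the population weight `w_h` represents the
occupancy distribution: `⟨w_h, f⟩_{μ_h} = Σ_y d_h^π(y) f(y)` for every `f ∈ H_h`. -/
theorem stmt_14 (X : ℕ → Type) [∀ t, Fintype (X t)] [Unique (X 0)]
    (h : ℕ) (hh : 1 ≤ h)
    (μ : ∀ t, X t → ℝ)
    (hμ0 : ∀ t x, 0 ≤ μ t x) (hμ1 : ∀ t, ∑ x, μ t x = 1)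
    (hμmass : μ 0 default = 1)
    (P : ∀ t, X t → X (t + 1) → ℝ)
    (hP0 : ∀ t x y, 0 ≤ P t x y) (hP1 : ∀ t x, ∑ y, P t x y = 1)
    (Hs : ∀ t, Submodule ℝ (X t → ℝ))
    (hnorm : ∀ t, ∀ f ∈ Hs t, (∑ x, μ t x * f x ^ 2 = 0) → f = 0)
    (hcomplete : ∀ t, 1 ≤ t → t + 1 ≤ h → ∀ f ∈ Hs (t + 1),
      (fun x => ∑ y, P t x y * f y) ∈ Hs t)
    (w : ∀ t, X t → ℝ)
    (hw0 : ∀ x, w 0 x = 1)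
    (hwmem : ∀ t, 1 ≤ t → t ≤ h → w t ∈ Hs t)
    (hmatch : ∀ t, t + 1 ≤ h → ∀ f ∈ Hs (t + 1),
      ∑ y, μ (t + 1) y * w (t + 1) y * f y =
        ∑ x, μ t x * w t x * ∑ y, P t x y * f y)
    (dpi : ∀ t, X t → ℝ)
    (hdpi0 : ∀ x, dpi 0 x = 1)
    (hdpiStep : ∀ t y, dpi (t + 1) y = ∑ x, dpi t x * P t x y) :
    ∀ f ∈ Hs h, ∑ y, μ h y * w h y * f y = ∑ y, dpi h y * f y := by
  have key : ∀ t, 1 ≤ t → t ≤ h → ∀ f ∈ Hs t,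
      ∑ y, μ t y * w t y * f y = ∑ y, dpi t y * f y := by
    intro t
    induction t with
    | zero => intro ht; omega
    | succ n ih =>
      intro _ hth f hf
      rcases Nat.eq_zero_or_pos n with h0 | hn
      · subst h0
        have h1 := hmatch 0 (by omega) f hf
        rw [h1, Fintype.sum_unique, hμmass, hw0]
        simp only [hdpiStep, Fintype.sum_unique, hdpi0, one_mul]
      · have hg : (fun x => ∑ y, P n x y * f y) ∈ Hs n :=
          hcomplete n hn hth f hf
        have h1 := hmatch n hth f hf
        have h2 := ih hn (by omega) _ hg
        rw [h1, h2]
        simp only [hdpiStep]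
        rw [Finset.sum_congr rfl (fun x _ => Finset.mul_sum ..),
          Finset.sum_comm]
        refine Finset.sum_congr rfl fun y _ => ?_
        rw [Finset.sum_mul]
        exact Finset.sum_congr rfl fun x _ => by ring
  exact key h hh le_rfl
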